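/- Let D be a finite index set and A, B complex D×D matrices. Suppose there exist vectors u_x, v_y (x, y ∈ D) in a finite-dimensional complex inner product space such that A_{x,y} = ⟨u_x|v_y⟩ for all x, y, and ‖u_x‖² ≤ c and ‖v_y‖² ≤ c for all x, y, where c ≥ 0. Then ‖A∘B‖ ≤ c·‖B‖. (This expresses the bound ‖A∘B‖ ≤ γ₂(A)·‖B‖, where γ₂(A) is the least such c over all factorizations of A.) -/

import Mathlib

open scoped Matrix

/-- The operator (spectral) norm of a complex matrix, i.e. the operator norm of its
action on the Euclidean space `ℂ^m`. -/
noncomputable def matOpNorm {m : Type*} [Fintype m] [DecidableEq m]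
    (M : Matrix m m ℂ) : ℝ :=
  ‖Matrix.toEuclideanCLM (𝕜 := ℂ) M‖

/-- if `A` admits a factorization `A_{x,y} = ⟨u_x, v_y⟩` with all
`‖u_x‖² ≤ c` and `‖v_y‖² ≤ c`, then `‖A ∘ B‖ ≤ c‖B‖` (the bound `‖A∘B‖ ≤ γ₂(A)‖B‖`). -/
theorem stmt4
    {D : Type*} [Fintype D] [DecidableEq D]
    {E : Type*} [NormedAddCommGroup E] [InnerProductSpace ℂ E] [FiniteDimensional ℂ E]
    (A B : Matrix D D ℂ) (u v : D → E) (c : ℝ) (hc : 0 ≤ c)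
    (hA : ∀ x y : D, A x y = inner ℂ (u x) (v y))
    (hu : ∀ x : D, ‖u x‖ ^ 2 ≤ c) (hv : ∀ y : D, ‖v y‖ ^ 2 ≤ c) :
    matOpNorm (A ⊙ B) ≤ c * matOpNorm B := by
  classical
  set b := stdOrthonormalBasis ℂ E with hb
  set ι := Fin (Module.finrank ℂ E)
  set r : D → ι → ℂ := fun x i => b.repr (u x) i with hr
  set s : D → ι → ℂ := fun y i => b.repr (v y) i with hs
  -- factorization through coordinates
  have factA : ∀ x y, A x y = ∑ i, (starRingEnd ℂ) (r x i) * s y i := by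
    intro x y
    rw [hA x y, ← b.sum_inner_mul_inner (u x) (v y)]
    refine Finset.sum_congr rfl fun i _ => ?_
    simp only [hr, hs, b.repr_apply_apply]
    rw [inner_conj_symm]
  have normr : ∀ x, ∑ i, ‖r x i‖ ^ 2 = ‖u x‖ ^ 2 := by
    intro x
    rw [← b.repr.norm_map (u x), PiLp.norm_sq_eq_of_L2]
  have norms : ∀ y, ∑ i, ‖s y i‖ ^ 2 = ‖v y‖ ^ 2 := by
    intro y
    rw [← b.repr.norm_map (v y), PiLp.norm_sq_eq_of_L2]
  set T := Matrix.toEuclideanCLM (𝕜 := ℂ) (A ⊙ B) with hT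
  set TB := Matrix.toEuclideanCLM (𝕜 := ℂ) B with hTB
  -- the split vectors
  set Ψ : (EuclideanSpace ℂ D) → ι → EuclideanSpace ℂ D :=
    fun ψ i => (WithLp.equiv 2 (D → ℂ)).symm (fun x => ψ x * r x i) with hΨ
  set Φ : (EuclideanSpace ℂ D) → ι → EuclideanSpace ℂ D :=
    fun φ i => (WithLp.equiv 2 (D → ℂ)).symm (fun y => s y i * φ y) with hΦ
  have normΨ : ∀ ψ, ∑ i, ‖Ψ ψ i‖ ^ 2 ≤ c * ‖ψ‖ ^ 2 := by
    intro ψ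
    have : ∀ i, ‖Ψ ψ i‖ ^ 2 = ∑ x, ‖ψ x‖ ^ 2 * ‖r x i‖ ^ 2 := by
      intro i
      rw [PiLp.norm_sq_eq_of_L2]
      exact Finset.sum_congr rfl fun x _ => by
        simp [hΨ, norm_mul, mul_pow]
    simp_rw [this]
    rw [Finset.sum_comm]
    calc ∑ x, ∑ i, ‖ψ x‖ ^ 2 * ‖r x i‖ ^ 2
        = ∑ x, ‖ψ x‖ ^ 2 * ‖u x‖ ^ 2 := by
          refine Finset.sum_congr rfl fun x _ => ?_
          rw [← Finset.mul_sum, normr x]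
      _ ≤ ∑ x, ‖ψ x‖ ^ 2 * c := by
          refine Finset.sum_le_sum fun x _ => ?_
          exact mul_le_mul_of_nonneg_left (hu x) (by positivity)
      _ = c * ‖ψ‖ ^ 2 := by
          rw [PiLp.norm_sq_eq_of_L2, ← Finset.sum_mul, mul_comm]
  have normΦ : ∀ φ, ∑ i, ‖Φ φ i‖ ^ 2 ≤ c * ‖φ‖ ^ 2 := by
    intro φ
    have : ∀ i, ‖Φ φ i‖ ^ 2 = ∑ y, ‖φ y‖ ^ 2 * ‖s y i‖ ^ 2 := by
      intro i
      rw [PiLp.norm_sq_eq_of_L2]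
      exact Finset.sum_congr rfl fun y _ => by
        simp [hΦ, norm_mul, mul_pow]; ring
    simp_rw [this]
    rw [Finset.sum_comm]
    calc ∑ y, ∑ i, ‖φ y‖ ^ 2 * ‖s y i‖ ^ 2
        = ∑ y, ‖φ y‖ ^ 2 * ‖v y‖ ^ 2 := by
          refine Finset.sum_congr rfl fun y _ => ?_
          rw [← Finset.mul_sum, norms y]
      _ ≤ ∑ y, ‖φ y‖ ^ 2 * c := by
          refine Finset.sum_le_sum fun y _ => ?_
          exact mul_le_mul_of_nonneg_left (hv y) (by positivity)
      _ = c * ‖φ‖ ^ 2 := by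
          rw [PiLp.norm_sq_eq_of_L2, ← Finset.sum_mul, mul_comm]
  -- key algebraic identity
  have key : ∀ ψ φ : EuclideanSpace ℂ D,
      (inner ℂ ψ (T φ) : ℂ) = ∑ i, (inner ℂ (Ψ ψ i) (TB (Φ φ i)) : ℂ) := by
    intro ψ φ
    have hTapp : ∀ x, (T φ) x = ∑ y, (A x y * B x y) * φ y := by
      intro x
      have := congrFun (Matrix.ofLp_toEuclideanCLM (𝕜 := ℂ) (A ⊙ B) φ) x
      exact this.trans (by simp [Matrix.mulVec, dotProduct, Matrix.hadamard_apply])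
    have hTBapp : ∀ (w : EuclideanSpace ℂ D) x, (TB w) x = ∑ y, B x y * w y := by
      intro w x
      have := congrFun (Matrix.ofLp_toEuclideanCLM (𝕜 := ℂ) B w) x
      exact this.trans (by simp [Matrix.mulVec, dotProduct])
    have lhs : (inner ℂ ψ (T φ) : ℂ)
        = ∑ x, ∑ y, ∑ i, (starRingEnd ℂ) (ψ x) * ((starRingEnd ℂ) (r x i) * s y i)
            * B x y * φ y := by
      rw [PiLp.inner_apply]
      refine Finset.sum_congr rfl fun x _ => ?_
      rw [RCLike.inner_apply', hTapp x, Finset.mul_sum]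
      refine Finset.sum_congr rfl fun y _ => ?_
      rw [factA x y, Finset.sum_mul, Finset.sum_mul, Finset.mul_sum]
      refine Finset.sum_congr rfl fun i _ => ?_
      ring
    have rhs : ∀ i, (inner ℂ (Ψ ψ i) (TB (Φ φ i)) : ℂ)
        = ∑ x, ∑ y, (starRingEnd ℂ) (ψ x) * ((starRingEnd ℂ) (r x i) * s y i)
            * B x y * φ y := by
      intro i
      rw [PiLp.inner_apply]
      refine Finset.sum_congr rfl fun x _ => ?_
      rw [RCLike.inner_apply', hTBapp (Φ φ i) x, Finset.mul_sum]
      refine Finset.sum_congr rfl fun y _ => ?_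
      have h1 : (Ψ ψ i) x = ψ x * r x i := rfl
      have h2 : (Φ φ i) y = s y i * φ y := rfl
      rw [h1, h2, map_mul]
      ring
    rw [lhs]
    simp_rw [rhs]
    refine Eq.trans (Finset.sum_congr rfl fun x _ => Finset.sum_comm) ?_
    exact Finset.sum_comm
  -- the bilinear bound
  have bound : ∀ ψ φ : EuclideanSpace ℂ D,
      ‖(inner ℂ ψ (T φ) : ℂ)‖ ≤ ‖TB‖ * (c * (‖ψ‖ * ‖φ‖)) := by
    intro ψ φ
    rw [key ψ φ]
    calc ‖∑ i, (inner ℂ (Ψ ψ i) (TB (Φ φ i)) : ℂ)‖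
        ≤ ∑ i, ‖(inner ℂ (Ψ ψ i) (TB (Φ φ i)) : ℂ)‖ := norm_sum_le _ _
      _ ≤ ∑ i, ‖Ψ ψ i‖ * (‖TB‖ * ‖Φ φ i‖) := by
          refine Finset.sum_le_sum fun i _ => ?_
          exact le_trans (norm_inner_le_norm _ _)
            (mul_le_mul_of_nonneg_left (TB.le_opNorm _) (norm_nonneg _))
      _ = ‖TB‖ * ∑ i, ‖Ψ ψ i‖ * ‖Φ φ i‖ := by
          rw [Finset.mul_sum]; exact Finset.sum_congr rfl fun i _ => by ring
      _ ≤ ‖TB‖ * (c * (‖ψ‖ * ‖φ‖)) := by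
          refine mul_le_mul_of_nonneg_left ?_ (norm_nonneg _)
          have cs := Finset.sum_mul_sq_le_sq_mul_sq Finset.univ
            (fun i => ‖Ψ ψ i‖) (fun i => ‖Φ φ i‖)
          have h1 : (∑ i, ‖Ψ ψ i‖ * ‖Φ φ i‖) ^ 2 ≤ (c * (‖ψ‖ * ‖φ‖)) ^ 2 := by
            refine cs.trans ?_
            have := mul_le_mul (normΨ ψ) (normΦ φ)
              (Finset.sum_nonneg fun i _ => by positivity) (by positivity)
            calc (∑ i, ‖Ψ ψ i‖ ^ 2) * ∑ i, ‖Φ φ i‖ ^ 2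
                ≤ (c * ‖ψ‖ ^ 2) * (c * ‖φ‖ ^ 2) := this
              _ = (c * (‖ψ‖ * ‖φ‖)) ^ 2 := by ring
          have hnn : (0:ℝ) ≤ ∑ i, ‖Ψ ψ i‖ * ‖Φ φ i‖ :=
            Finset.sum_nonneg fun i _ => by positivity
          nlinarith [hnn, mul_nonneg hc (mul_nonneg (norm_nonneg ψ) (norm_nonneg φ))]
  -- conclude
  have main : ∀ φ : EuclideanSpace ℂ D, ‖T φ‖ ≤ c * ‖TB‖ * ‖φ‖ := by
    intro φ
    rcases eq_or_lt_of_le (norm_nonneg (T φ)) with h | h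
    · rw [← h]; positivity
    · have hb := bound (T φ) φ
      have hinner : ‖(inner ℂ (T φ) (T φ) : ℂ)‖ = ‖T φ‖ * ‖T φ‖ := by
        rw [inner_self_eq_norm_sq_to_K (𝕜 := ℂ)]
        rw [norm_pow, RCLike.norm_ofReal, abs_of_nonneg (norm_nonneg _), sq]
      rw [hinner] at hb
      have := le_of_mul_le_mul_right (by linarith [hb] : ‖T φ‖ * ‖T φ‖ ≤ (c * ‖TB‖ * ‖φ‖) * ‖T φ‖) h
      exact this
  calc matOpNorm (A ⊙ B) = ‖T‖ := rfl
    _ ≤ c * ‖TB‖ := T.opNorm_le_bound (by positivity) main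
    _ = c * matOpNorm B := rfl
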